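/- Cancellation estimate for ball averages: let n ≥ 1, ε > 0, L ≥ 0, and x, y ∈ ℝⁿ with |x − y| ≤ ε. Let u : ℝⁿ → ℝ be bounded Borel and suppose |u(z) − u(z')| ≤ L(|z − z'| + ε) for all z, z' ∈ B_{3ε}(x). Then | ⨍_{B_ε(x)} u(z) dz − ⨍_{B_ε(y)} u(z) dz | ≤ 6 n L |x − y|. -/

import Mathlib

open MeasureTheory Metric Set

lemma pow_sub_pow_le_aux (n : ℕ) {a b : ℝ} (hb : 0 ≤ b) (hba : b ≤ a) :
    a ^ n - b ^ n ≤ n * a ^ (n - 1) * (a - b) := by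
  have ha : 0 ≤ a := le_trans hb hba
  have hgeom := geom_sum₂_mul a b n
  have hsum : (∑ i ∈ Finset.range n, a ^ i * b ^ (n - 1 - i)) ≤ n * a ^ (n - 1) := by
    calc (∑ i ∈ Finset.range n, a ^ i * b ^ (n - 1 - i))
        ≤ ∑ i ∈ Finset.range n, a ^ (n - 1) := by
          apply Finset.sum_le_sum
          intro i hi
          have hi' : i < n := Finset.mem_range.mp hi
          calc a ^ i * b ^ (n - 1 - i) ≤ a ^ i * a ^ (n - 1 - i) := by
                apply mul_le_mul_of_nonneg_left _ (pow_nonneg ha i)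
                exact pow_le_pow_left₀ hb hba _
            _ = a ^ (i + (n - 1 - i)) := (pow_add a i (n - 1 - i)).symm
            _ = a ^ (n - 1) := by
                congr 1
                omega
      _ = n * a ^ (n - 1) := by
          rw [Finset.sum_const, Finset.card_range, nsmul_eq_mul]
  calc a ^ n - b ^ n = (∑ i ∈ Finset.range n, a ^ i * b ^ (n - 1 - i)) * (a - b) := hgeom.symm
    _ ≤ (n * a ^ (n - 1)) * (a - b) :=
        mul_le_mul_of_nonneg_right hsum (sub_nonneg.mpr hba)

/-- **Cancellation estimate for ball averages.** Let `n ≥ 1`, `ε > 0`, `L ≥ 0`,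
`|x − y| ≤ ε`, and let `u` be bounded Borel with `|u(z) − u(z')| ≤ L(|z − z'| + ε)` for all
`z, z' ∈ B_{3ε}(x)`. Then `|⨍_{B_ε(x)} u − ⨍_{B_ε(y)} u| ≤ 6 n L |x − y|`. -/
theorem ball_average_cancellation (n : ℕ) (hn : 1 ≤ n) (ε L : ℝ) (hε : 0 < ε) (hL : 0 ≤ L)
    (x y : EuclideanSpace ℝ (Fin n)) (hxy : dist x y ≤ ε)
    (u : EuclideanSpace ℝ (Fin n) → ℝ)
    (humeas : Measurable u) (hubdd : ∃ M, ∀ z, |u z| ≤ M)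
    (hulip : ∀ z ∈ Metric.ball x (3 * ε), ∀ z' ∈ Metric.ball x (3 * ε),
      |u z - u z'| ≤ L * (dist z z' + ε)) :
    |(⨍ z in Metric.ball x ε, u z) - ⨍ z in Metric.ball y ε, u z| ≤
      6 * n * L * dist x y := by
  haveI : Nonempty (Fin n) := ⟨⟨0, hn⟩⟩
  haveI : Nontrivial (EuclideanSpace ℝ (Fin n)) := by
    unfold EuclideanSpace PiLp
    infer_instance
  set d : ℝ := dist x y with hd
  have hd0 : 0 ≤ d := dist_nonneg
  have hεd : 0 ≤ ε - d := sub_nonneg.mpr hxy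
  set B1 := Metric.ball x ε with hB1
  set B2 := Metric.ball y ε with hB2
  have hrank : Module.finrank ℝ (EuclideanSpace ℝ (Fin n)) = n := by simp
  set K : ℝ := (volume (Metric.ball (0 : EuclideanSpace ℝ (Fin n)) 1)).toReal with hK
  have hKfin : volume (Metric.ball (0 : EuclideanSpace ℝ (Fin n)) 1) ≠ ⊤ := measure_ball_lt_top.ne
  have hKpos : 0 < K := ENNReal.toReal_pos (measure_ball_pos volume _ one_pos).ne' hKfin
  -- volumes of the balls
  have hvol : ∀ (c : EuclideanSpace ℝ (Fin n)) (r : ℝ), 0 ≤ r →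
      volume (Metric.ball c r) = ENNReal.ofReal (r ^ n) * volume (Metric.ball (0 : EuclideanSpace ℝ (Fin n)) 1) := by
    intro c r hr
    rw [Measure.addHaar_ball volume c hr, hrank]
  have hvolR : ∀ (c : EuclideanSpace ℝ (Fin n)) (r : ℝ), 0 ≤ r →
      (volume (Metric.ball c r)).toReal = r ^ n * K := by
    intro c r hr
    rw [hvol c r hr, ENNReal.toReal_mul, ENNReal.toReal_ofReal (pow_nonneg hr n)]
  have hV1 : (volume B1).toReal = ε ^ n * K := hvolR x ε hε.le
  have hV2 : (volume B2).toReal = ε ^ n * K := hvolR y ε hε.le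
  have hVpos : 0 < ε ^ n * K := mul_pos (pow_pos hε n) hKpos
  have hB1fin : volume B1 ≠ ⊤ := measure_ball_lt_top.ne
  have hB2fin : volume B2 ≠ ⊤ := measure_ball_lt_top.ne
  -- measure of the symmetric-difference pieces
  have hmdiff : ∀ (c : EuclideanSpace ℝ (Fin n)), (volume (Metric.ball c ε \ Metric.ball c (ε - d))).toReal
      ≤ n * ε ^ (n - 1) * d * K := by
    intro c
    have hsub : Metric.ball c (ε - d) ⊆ Metric.ball c ε :=
      Metric.ball_subset_ball (by linarith)
    have hfin : volume (Metric.ball c (ε - d)) ≠ ⊤ := measure_ball_lt_top.ne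
    have hmeas := measure_diff hsub measurableSet_ball.nullMeasurableSet hfin
    rw [hmeas, ENNReal.toReal_sub_of_le (measure_mono hsub) measure_ball_lt_top.ne,
      hvolR c ε hε.le, hvolR c (ε - d) hεd]
    have : ε ^ n - (ε - d) ^ n ≤ n * ε ^ (n - 1) * d := by
      have := pow_sub_pow_le_aux n hεd (by linarith : ε - d ≤ ε)
      simpa using this
    calc ε ^ n * K - (ε - d) ^ n * K = (ε ^ n - (ε - d) ^ n) * K := by ring
      _ ≤ (n * ε ^ (n - 1) * d) * K :=
          mul_le_mul_of_nonneg_right this hKpos.le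
  have hm1 : (volume (B1 \ B2)).toReal ≤ n * ε ^ (n - 1) * d * K := by
    refine le_trans ?_ (hmdiff x)
    have hfin : volume (Metric.ball x ε \ Metric.ball x (ε - d)) ≠ ⊤ :=
      ((measure_mono diff_subset).trans_lt measure_ball_lt_top).ne
    apply ENNReal.toReal_mono hfin
    apply measure_mono
    apply diff_subset_diff_right
    intro z hz
    rw [Metric.mem_ball] at *
    calc dist z y ≤ dist z x + dist x y := dist_triangle z x y
      _ < (ε - d) + d := add_lt_add_of_lt_of_le hz (le_of_eq hd.symm)
      _ = ε := by ring
  have hm2 : (volume (B2 \ B1)).toReal ≤ n * ε ^ (n - 1) * d * K := by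
    refine le_trans ?_ (hmdiff y)
    have hfin : volume (Metric.ball y ε \ Metric.ball y (ε - d)) ≠ ⊤ :=
      ((measure_mono diff_subset).trans_lt measure_ball_lt_top).ne
    apply ENNReal.toReal_mono hfin
    apply measure_mono
    apply diff_subset_diff_right
    intro z hz
    rw [Metric.mem_ball] at *
    have hdyx : dist y x = d := by rw [hd, dist_comm]
    calc dist z x ≤ dist z y + dist y x := dist_triangle z y x
      _ < (ε - d) + d := add_lt_add_of_lt_of_le hz (le_of_eq hdyx)
      _ = ε := by ring
  -- the function f := u - u x
  set f : EuclideanSpace ℝ (Fin n) → ℝ := fun z => u z - u x with hf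
  obtain ⟨M, hM⟩ := hubdd
  have hfmeas : Measurable f := humeas.sub measurable_const
  have hfint : ∀ s : Set (EuclideanSpace ℝ (Fin n)), volume s ≠ ⊤ → IntegrableOn f s volume := by
    intro s hs
    apply Measure.integrableOn_of_bounded hs hfmeas.aestronglyMeasurable
      (M := M + |u x|)
    filter_upwards with z
    simp only [hf, Real.norm_eq_abs]
    calc |u z - u x| ≤ |u z| + |u x| := abs_sub _ _
      _ ≤ M + |u x| := by linarith [hM z]
  -- pointwise bound on f
  have hxmem : x ∈ Metric.ball x (3 * ε) := by
    rw [Metric.mem_ball, dist_self]; linarith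
  have hfbd1 : ∀ z ∈ B1 \ B2, ‖f z‖ ≤ 3 * L * ε := by
    intro z hz
    have hzx : dist z x < ε := Metric.mem_ball.mp hz.1
    have hz3 : z ∈ Metric.ball x (3 * ε) := Metric.mem_ball.mpr (by linarith)
    have := hulip z hz3 x hxmem
    rw [Real.norm_eq_abs]
    calc |u z - u x| ≤ L * (dist z x + ε) := this
      _ ≤ L * (3 * ε) := by nlinarith
      _ = 3 * L * ε := by ring
  have hfbd2 : ∀ z ∈ B2 \ B1, ‖f z‖ ≤ 3 * L * ε := by
    intro z hz
    have hzy : dist z y < ε := Metric.mem_ball.mp hz.1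
    have hzx : dist z x < 2 * ε := by
      have hyx : dist y x ≤ ε := by rw [dist_comm]; exact hxy
      calc dist z x ≤ dist z y + dist y x := dist_triangle z y x
        _ < ε + ε := add_lt_add_of_lt_of_le hzy hyx
        _ = 2 * ε := by ring
    have hz3 : z ∈ Metric.ball x (3 * ε) := Metric.mem_ball.mpr (by linarith)
    have := hulip z hz3 x hxmem
    rw [Real.norm_eq_abs]
    calc |u z - u x| ≤ L * (dist z x + ε) := this
      _ ≤ L * (3 * ε) := by nlinarith
      _ = 3 * L * ε := by ring
  -- integral bounds on the pieces
  have hI1 : |∫ z in B1 \ B2, f z| ≤ 3 * L * ε * (n * ε ^ (n - 1) * d * K) := by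
    have := norm_setIntegral_le_of_norm_le_const (μ := volume)
      (((measure_mono diff_subset).trans_lt measure_ball_lt_top) : volume (B1 \ B2) < ⊤)
      hfbd1
    rw [Real.norm_eq_abs] at this
    refine this.trans ?_
    exact mul_le_mul_of_nonneg_left hm1 (by positivity)
  have hI2 : |∫ z in B2 \ B1, f z| ≤ 3 * L * ε * (n * ε ^ (n - 1) * d * K) := by
    have := norm_setIntegral_le_of_norm_le_const (μ := volume)
      (((measure_mono diff_subset).trans_lt measure_ball_lt_top) : volume (B2 \ B1) < ⊤)
      hfbd2
    rw [Real.norm_eq_abs] at this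
    refine this.trans ?_
    exact mul_le_mul_of_nonneg_left hm2 (by positivity)
  -- decompose the integral difference
  have hsplit1 : ∫ z in B1, f z = (∫ z in B1 ∩ B2, f z) + ∫ z in B1 \ B2, f z :=
    (integral_inter_add_diff measurableSet_ball (hfint B1 hB1fin)).symm
  have hsplit2 : ∫ z in B2, f z = (∫ z in B1 ∩ B2, f z) + ∫ z in B2 \ B1, f z := by
    rw [inter_comm]
    exact (integral_inter_add_diff measurableSet_ball (hfint B2 hB2fin)).symm
  have hdiff : (∫ z in B1, f z) - ∫ z in B2, f z
      = (∫ z in B1 \ B2, f z) - ∫ z in B2 \ B1, f z := by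
    rw [hsplit1, hsplit2]; ring
  -- relate averages of u to integrals of f
  have havg : (⨍ z in B1, u z) - ⨍ z in B2, u z
      = (ε ^ n * K)⁻¹ * ((∫ z in B1, f z) - ∫ z in B2, f z) := by
    have hint1 : ∫ z in B1, u z = (∫ z in B1, f z) + (ε ^ n * K) * u x := by
      have : ∫ z in B1, u z = ∫ z in B1, (f z + u x) := by
        apply setIntegral_congr_fun measurableSet_ball
        intro z _; simp [hf]
      rw [this, integral_add (hfint B1 hB1fin) (integrableOn_const
        measure_ball_lt_top.ne), setIntegral_const, measureReal_def, hV1, smul_eq_mul]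
    have hint2 : ∫ z in B2, u z = (∫ z in B2, f z) + (ε ^ n * K) * u x := by
      have : ∫ z in B2, u z = ∫ z in B2, (f z + u x) := by
        apply setIntegral_congr_fun measurableSet_ball
        intro z _; simp [hf]
      rw [this, integral_add (hfint B2 hB2fin) (integrableOn_const
        measure_ball_lt_top.ne), setIntegral_const, measureReal_def, hV2, smul_eq_mul]
    rw [setAverage_eq, setAverage_eq, measureReal_def, measureReal_def, hV1, hV2, smul_eq_mul, smul_eq_mul, hint1, hint2]
    ring
  rw [havg, hdiff]
  rw [abs_mul, abs_of_nonneg (inv_nonneg.mpr hVpos.le)]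
  have habs : |(∫ z in B1 \ B2, f z) - ∫ z in B2 \ B1, f z|
      ≤ 2 * (3 * L * ε * (n * ε ^ (n - 1) * d * K)) := by
    calc |(∫ z in B1 \ B2, f z) - ∫ z in B2 \ B1, f z|
        ≤ |∫ z in B1 \ B2, f z| + |∫ z in B2 \ B1, f z| := abs_sub _ _
      _ ≤ 2 * (3 * L * ε * (n * ε ^ (n - 1) * d * K)) := by linarith
  calc (ε ^ n * K)⁻¹ * |(∫ z in B1 \ B2, f z) - ∫ z in B2 \ B1, f z|
      ≤ (ε ^ n * K)⁻¹ * (2 * (3 * L * ε * (n * ε ^ (n - 1) * d * K))) :=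
        mul_le_mul_of_nonneg_left habs (inv_nonneg.mpr hVpos.le)
    _ = 6 * n * L * d * ((ε * ε ^ (n - 1) * K) * (ε ^ n * K)⁻¹) := by ring
    _ = 6 * n * L * d := by
        rw [← pow_succ']
        have : n - 1 + 1 = n := by omega
        rw [this, mul_inv_cancel₀ hVpos.ne', mul_one]
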